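/- Let (L₁, L₂, P, (⊛ᵢ, ↙ⁱ, ↖ᵢ)_{i∈I}) be a multi-adjoint object-oriented frame, (X, Y, φ, τ) a context of this frame, and φ†, φ_† the associated operators. The multi-adjoint object-oriented concept lattice K† = { (μ, λ) ∈ (X → L₁) × (Y → L₂) ∣ φ_† λ = μ and φ† μ = λ }, ordered by (μ₁, λ₁) ≤ (μ₂, λ₂) ⇔ λ₁ ≤ λ₂ pointwise, is a complete lattice, and the second projection (μ, λ) ↦ λ is an order isomorphism from K† onto the complete lattice Fix(φ†∘φ_†) = { λ : Y → L₂ ∣ φ†(φ_† λ) = λ } with the pointwise order. -/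
import Mathlib


/-- The multi-adjoint object-oriented concept lattice of a context: pairs
`(μ, lam)` with `φ_† lam = μ` and `φ† μ = lam`. -/
abbrev MAObjConceptLattice {L₁ L₂ : Type*} {X Y : Type*}
    (dag : (X → L₁) → Y → L₂) (ldag : (Y → L₂) → X → L₁) : Type _ :=
  {p : (X → L₁) × (Y → L₂) // ldag p.2 = p.1 ∧ dag p.1 = p.2}

/-- Concepts are ordered by comparing their second components (pointwise). -/
instance {L₁ L₂ : Type*} [Preorder L₂] {X Y : Type*}
    (dag : (X → L₁) → Y → L₂) (ldag : (Y → L₂) → X → L₁) :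
    LE (MAObjConceptLattice dag ldag) :=
  ⟨fun p q => p.1.2 ≤ q.1.2⟩

/-- The multi-adjoint object-oriented concept lattice, ordered
by second components, is a complete lattice, and the second projection is an
order isomorphism onto the fixed points of `φ† ∘ φ_†` with the pointwise
order. -/
theorem stmt_16 {L₁ L₂ P : Type*} [CompleteLattice L₁] [CompleteLattice L₂]
    [CompleteLattice P] {I : Type*}
    (w : I → L₁ → P → L₂) (ld : I → L₂ → P → L₁) (lu : I → L₂ → L₁ → P)
    (adj : ∀ (i : I) (x : L₁) (z : P) (y : L₂),
      (w i x z ≤ y ↔ x ≤ ld i y z) ∧ (w i x z ≤ y ↔ z ≤ lu i y x))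
    {X Y : Type*} (φ : X → Y → P) (τ : Y → I)
    (dag : (X → L₁) → Y → L₂) (ldag : (Y → L₂) → X → L₁)
    (hdag : ∀ (μ : X → L₁) (y : Y), dag μ y = ⨆ x, w (τ y) (μ x) (φ x y))
    (hldag : ∀ (lam : Y → L₂) (x : X), ldag lam x = ⨅ y, ld (τ y) (lam y) (φ x y)) :
    -- the concept lattice is a complete lattice whose order is the one above
    (∃ inst : CompleteLattice (MAObjConceptLattice dag ldag),
      ∀ p q : MAObjConceptLattice dag ldag, inst.le p q ↔ p ≤ q) ∧
    -- the second projection is an order isomorphism onto `Fix (φ† ∘ φ_†)`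
    (∃ e : MAObjConceptLattice dag ldag ≃o {lam : Y → L₂ // dag (ldag lam) = lam},
      ∀ p : MAObjConceptLattice dag ldag, (e p : Y → L₂) = p.1.2) := by
  -- `dag ⊣ ldag` is a Galois connection
  have gc : GaloisConnection dag ldag := by
    intro μ lam
    constructor
    · intro h x
      rw [hldag]
      refine le_iInf fun y => ?_
      exact ((adj (τ y) (μ x) (φ x y) (lam y)).1).mp
        (le_trans (le_iSup (fun x => w (τ y) (μ x) (φ x y)) x) ((hdag μ y) ▸ h y))
    · intro h y
      rw [hdag]
      refine iSup_le fun x => ?_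
      exact ((adj (τ y) (μ x) (φ x y) (lam y)).1).mpr
        (le_trans (h x) (le_trans (hldag lam x).le
          (iInf_le (fun y => ld (τ y) (lam y) (φ x y)) y)))
  -- the monotone closure-like operator
  have kmono : Monotone (fun lam => dag (ldag lam)) :=
    gc.monotone_l.comp gc.monotone_u
  letI pK : PartialOrder (MAObjConceptLattice dag ldag) :=
    { le := fun p q => p ≤ q
      lt := fun a b => a ≤ b ∧ ¬ b ≤ a
      lt_iff_le_not_ge := fun _ _ => Iff.rfl
      le_refl := fun p => le_refl p.1.2
      le_trans := fun a b c hab hbc => le_trans (α := Y → L₂) hab hbc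
      le_antisymm := fun a b h h' =>
        Subtype.ext (Prod.ext
          ((a.2.1.symm.trans (congrArg ldag (le_antisymm (α := Y → L₂) h h'))).trans b.2.1)
          (le_antisymm (α := Y → L₂) h h')) }
  letI pKp : Preorder (MAObjConceptLattice dag ldag) := pK.toPreorder
  letI CLfix : CompleteLattice {lam : Y → L₂ // dag (ldag lam) = lam} :=
    fixedPoints.completeLattice (⟨fun lam => dag (ldag lam), kmono⟩ : (Y → L₂) →o (Y → L₂))
  letI CLfixp : Preorder {lam : Y → L₂ // dag (ldag lam) = lam} :=
    CLfix.toLattice.toSemilatticeSup.toPartialOrder.toPreorder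
  have fix_of : ∀ p : MAObjConceptLattice dag ldag, dag (ldag p.1.2) = p.1.2 :=
    fun p => by rw [p.2.1, p.2.2]
  have gi : @GaloisInsertion {lam : Y → L₂ // dag (ldag lam) = lam}
      (MAObjConceptLattice dag ldag)
      CLfixp pKp
      (fun f => ⟨(ldag f.1, f.1), rfl, f.2⟩) (fun p => ⟨p.1.2, fix_of p⟩) :=
    ⟨fun f _ => ⟨(ldag f.1, f.1), rfl, f.2⟩, fun f p => ⟨fun h => h, fun h => h⟩,
      fun p => le_refl (α := Y → L₂) p.1.2, fun _ _ => rfl⟩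
  constructor
  · exact ⟨GaloisInsertion.liftCompleteLattice gi, fun p q => Iff.rfl⟩
  · exact ⟨{ toFun := fun p => ⟨p.1.2, fix_of p⟩
             invFun := fun f => ⟨(ldag f.1, f.1), rfl, f.2⟩
             left_inv := fun p => Subtype.ext (Prod.ext p.2.1 rfl)
             right_inv := fun q => rfl
             map_rel_iff' := fun {a b} => ⟨fun h => h, fun h => h⟩ }, fun p => rfl⟩
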